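/- Let q = p^m with p > 3 an odd prime, and let δ(b) = #{u ∈ F_{q^2} : 2u^{q+1} + u^2 = b}. Then δ(3) = 4 if q ≡ 5 (mod 6), and δ(3) = 2 otherwise. -/

import Mathlib

/-- For p > 3, δ(3) = 4 if q ≡ 5 (mod 6) and δ(3) = 2 otherwise. -/
theorem delta_three (p m q : ℕ) (hp : p.Prime) (hodd : Odd p) (hp3 : 3 < p)
    (hm : 0 < m) (hq : q = p ^ m)
    (K : Type*) [Field K] [Fintype K] (hK : Fintype.card K = q ^ 2) :
    Nat.card {u : K // 2 * u ^ (q + 1) + u ^ 2 = 3}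
      = if q % 6 = 5 then 4 else 2 := by
  classical
  -- basic numerics
  have hqodd : Odd q := hq ▸ hodd.pow
  have hq5 : 5 ≤ q := by
    have h1 : p ≤ p ^ m := Nat.le_self_pow hm.ne' p
    have h2 : p % 2 = 1 := Nat.odd_iff.mp hodd
    omega
  have h3q : q % 3 ≠ 0 := by
    intro h
    have h3 : (3 : ℕ) ∣ p ^ m := hq ▸ Nat.dvd_of_mod_eq_zero h
    have := (Nat.prime_dvd_prime_iff_eq (by norm_num) hp).mp
      (Nat.Prime.dvd_of_dvd_pow (by norm_num) h3)
    omega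
  -- characteristic
  have hcard : Fintype.card K = p ^ (2 * m) := by
    rw [hK, hq, ← pow_mul, mul_comm]
  have hpK : (p : K) = 0 := by
    have h0 : ((Fintype.card K : ℕ) : K) = 0 := FiniteField.cast_card_eq_zero K
    rw [hcard] at h0
    push_cast at h0
    exact pow_eq_zero_iff (by positivity : 0 < 2 * m).ne' |>.mp h0
  have hring : ringChar K = p := CharP.ringChar_of_prime_eq_zero hp hpK
  haveI hchar : CharP K p := hring ▸ ringChar.charP K
  haveI : ExpChar K p := ExpChar.prime hp
  have hne : ∀ n : ℕ, 0 < n → n < p → (n : K) ≠ 0 := by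
    intro n hn0 hnp h
    have hd := (CharP.cast_eq_zero_iff K p n).mp h
    have := Nat.le_of_dvd hn0 hd
    omega
  have h2K : (2 : K) ≠ 0 := by
    have := hne 2 (by norm_num) (by omega); simpa using this
  have h3K : (3 : K) ≠ 0 := by
    have := hne 3 (by norm_num) (by omega); simpa using this
  have h4K : (4 : K) ≠ 0 := by
    have hp2 : p % 2 = 1 := Nat.odd_iff.mp hodd
    have := hne 4 (by norm_num) (by omega); simpa using this
  -- Frobenius
  set φ : K →+* K := iterateFrobenius K p m with hφdef
  have hφ : ∀ x : K, φ x = x ^ q := by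
    intro x; rw [hφdef, iterateFrobenius_def, hq]
  have hqq : ∀ x : K, (x ^ q) ^ q = x := by
    intro x
    rw [← pow_mul, ← pow_two, ← hK, FiniteField.pow_card]
  -- characterization of solutions
  have hiff : ∀ u : K, 2 * u ^ (q + 1) + u ^ 2 = 3 ↔
      (u ^ 2 = 1 ∨ (u ^ 2 = -3 ∧ u ^ q = -u)) := by
    intro u
    constructor
    · intro h
      have h1 : 2 * (u ^ q * u) + u ^ 2 = 3 := by rw [pow_succ] at h; exact h
      have h2 : 2 * (u * u ^ q) + (u ^ q) ^ 2 = 3 := by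
        have h5 := congrArg φ h
        simp only [map_add, map_mul, map_pow, map_ofNat] at h5
        rw [hφ u, pow_succ, hqq u] at h5
        exact h5
      have hsq : (u ^ q - u) * (u ^ q + u) = 0 := by linear_combination h2 - h1
      rcases mul_eq_zero.mp hsq with h' | h'
      · left
        have huq : u ^ q = u := sub_eq_zero.mp h'
        have h6 : (3 : K) * u ^ 2 = 3 * 1 := by linear_combination h1 - 2 * u * huq
        exact mul_left_cancel₀ h3K h6
      · right
        have huq : u ^ q = -u := by linear_combination h'
        exact ⟨by linear_combination -h1 + 2 * u * huq, huq⟩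
    · intro h
      rcases h with h | ⟨h, h'⟩
      · have huq : u ^ q = u := by
          have hq' : q = 2 * (q / 2) + 1 := by
            have := Nat.odd_iff.mp hqodd; omega
          rw [hq', pow_succ, pow_mul, h, one_pow, one_mul]
        rw [pow_succ, huq]
        linear_combination 3 * h
      · rw [pow_succ, h']
        linear_combination -h
  -- square root of -3
  have hm3ne : (-3 : K) ≠ 0 := neg_ne_zero.mpr h3K
  have hpow1 : (-3 : K) ^ (q - 1) = 1 := by
    have hq3 : (-3 : K) ^ q = -3 := by
      have h7 := hφ (-3 : K)
      rw [map_neg, map_ofNat] at h7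
      exact h7.symm
    have h8 : (-3 : K) ^ (q - 1) * (-3) = 1 * (-3) := by
      rw [one_mul, ← pow_succ]
      have h9 : q - 1 + 1 = q := by omega
      rw [h9, hq3]
    exact mul_right_cancel₀ hm3ne h8
  have hsquare : IsSquare (-3 : K) := by
    rw [FiniteField.isSquare_iff (by rw [hring]; omega) hm3ne]
    have hk : Fintype.card K / 2 = (q - 1) * ((q + 1) / 2) := by
      rw [hK]
      obtain ⟨t, ht⟩ := id hqodd
      rw [ht]
      have e1 : 2 * t + 1 - 1 = 2 * t := by omega
      have e2 : (2 * t + 1 + 1) / 2 = t + 1 := by omega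
      have e3 : (2 * t + 1) ^ 2 = 2 * (2 * t * (t + 1)) + 1 := by ring
      rw [e1, e2, e3, Nat.mul_add_div (by norm_num)]
      norm_num
    rw [hk, pow_mul, hpow1, one_pow]
  obtain ⟨s, hs⟩ := hsquare
  have hs2 : s ^ 2 = -3 := by rw [sq]; exact hs.symm
  have hs0 : s ≠ 0 := by
    intro h; apply hm3ne; rw [← hs2, h]; ring
  -- cube root of unity
  obtain ⟨ω, hω⟩ : ∃ ω : K, s = 2 * ω + 1 := ⟨(s - 1) / 2, by field_simp; ring⟩
  have hω2 : ω ^ 2 + ω + 1 = 0 := by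
    have h4 : (4 : K) * (ω ^ 2 + ω + 1) = 4 * 0 := by
      linear_combination hs2 - (s + 2 * ω + 1) * hω
    exact mul_left_cancel₀ h4K h4
  have hω3 : ω ^ 3 = 1 := by linear_combination (ω - 1) * hω2
  -- s^q
  have hωq : ω ^ q = ω ^ (q % 3) := by
    conv_lhs => rw [show q = 3 * (q / 3) + q % 3 from (Nat.div_add_mod q 3).symm]
    rw [pow_add, pow_mul, hω3, one_pow, one_mul]
  have hsq' : s ^ q = 2 * ω ^ q + 1 := by
    rw [← hφ s]
    conv_lhs => rw [hω]
    rw [map_add, map_mul, map_ofNat, map_one, hφ]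
  have hs_ne_negs : s ≠ -s := by
    intro h
    have h11 : (2 : K) * s = 0 := by linear_combination h
    rcases mul_eq_zero.mp h11 with h' | h'
    · exact h2K h'
    · exact hs0 h'
  have hsol_m3 : ∀ u : K, u ^ 2 = -3 ↔ (u = s ∨ u = -s) := by
    intro u
    constructor
    · intro h
      have h12 : (u - s) * (u + s) = 0 := by linear_combination h - hs2
      rcases mul_eq_zero.mp h12 with h' | h'
      · left; linear_combination h'
      · right; linear_combination h'
    · rintro (rfl | rfl)
      · exact hs2
      · rw [neg_pow, hs2]; norm_num
  have hsol_1 : ∀ u : K, u ^ 2 = 1 ↔ (u = 1 ∨ u = -1) := by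
    intro u
    constructor
    · intro h
      have h13 : (u - 1) * (u + 1) = 0 := by linear_combination h
      rcases mul_eq_zero.mp h13 with h' | h'
      · left; linear_combination h'
      · right; linear_combination h'
    · rintro (rfl | rfl) <;> norm_num
  have hone_ne : (1 : K) ≠ -1 := by
    intro h; apply h2K; linear_combination h
  have hs_ne_1 : s ≠ 1 := by
    intro h; apply h4K; rw [h] at hs2; linear_combination hs2
  have hs_ne_neg1 : s ≠ -1 := by
    intro h; apply h4K; rw [h] at hs2; linear_combination hs2
  have hNat : Nat.card {u : K // 2 * u ^ (q + 1) + u ^ 2 = 3}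
      = ({u : K | 2 * u ^ (q + 1) + u ^ 2 = 3} : Set K).ncard :=
    Nat.card_coe_set_eq _
  rw [hNat]
  -- case split on q % 3
  rcases (by omega : q % 3 = 1 ∨ q % 3 = 2) with h3 | h3
  · -- s^q = s, no extra solutions
    have hsq2 : s ^ q = s := by rw [hsq', hωq, h3, pow_one, ← hω]
    have hS : {u : K | 2 * u ^ (q + 1) + u ^ 2 = 3} = {1, -1} := by
      ext u
      simp only [Set.mem_setOf_eq, Set.mem_insert_iff, Set.mem_singleton_iff]
      rw [hiff u]
      constructor
      · rintro (h | ⟨h, h'⟩)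
        · exact (hsol_1 u).mp h
        · exfalso
          rcases (hsol_m3 u).mp h with rfl | rfl
          · exact hs_ne_negs (by linear_combination h' - hsq2)
          · rw [Odd.neg_pow hqodd, hsq2, neg_neg] at h'
            exact hs_ne_negs h'.symm
      · intro h
        exact Or.inl ((hsol_1 u).mpr h)
    rw [hS, Set.ncard_pair hone_ne]
    have h14 : q % 6 ≠ 5 := by
      have := Nat.odd_iff.mp hqodd; omega
    rw [if_neg h14]
  · -- s^q = -s, extra solutions
    have hsq2 : s ^ q = -s := by
      rw [hsq', hωq, h3]
      linear_combination 2 * hω2 + hω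
    have hnegsq : (-s) ^ q = -(-s) := by
      rw [Odd.neg_pow hqodd, hsq2, neg_neg]
    have hS : {u : K | 2 * u ^ (q + 1) + u ^ 2 = 3} = {1, -1, s, -s} := by
      ext u
      simp only [Set.mem_setOf_eq, Set.mem_insert_iff, Set.mem_singleton_iff]
      rw [hiff u]
      constructor
      · rintro (h | ⟨h, h'⟩)
        · rcases (hsol_1 u).mp h with rfl | rfl
          · exact Or.inl rfl
          · exact Or.inr (Or.inl rfl)
        · rcases (hsol_m3 u).mp h with rfl | rfl
          · exact Or.inr (Or.inr (Or.inl rfl))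
          · exact Or.inr (Or.inr (Or.inr rfl))
      · rintro (rfl | rfl | rfl | rfl)
        · exact Or.inl ((hsol_1 _).mpr (Or.inl rfl))
        · exact Or.inl ((hsol_1 _).mpr (Or.inr rfl))
        · exact Or.inr ⟨hs2, hsq2⟩
        · exact Or.inr ⟨(hsol_m3 _).mpr (Or.inr rfl), hnegsq⟩
    rw [hS]
    have hcount : ({1, -1, s, -s} : Set K).ncard = 4 := by
      rw [Set.ncard_insert_of_notMem (by
          simp only [Set.mem_insert_iff, Set.mem_singleton_iff]
          push_neg
          refine ⟨hone_ne, hs_ne_1.symm, ?_⟩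
          intro h
          exact hs_ne_neg1 (by linear_combination h)),
        Set.ncard_insert_of_notMem (by
          simp only [Set.mem_insert_iff, Set.mem_singleton_iff]
          push_neg
          refine ⟨fun h => hs_ne_neg1 h.symm, fun h => hs_ne_1 ?_⟩
          linear_combination h),
        Set.ncard_pair hs_ne_negs]
    rw [hcount]
    have h15 : q % 6 = 5 := by
      have := Nat.odd_iff.mp hqodd; omega
    rw [if_pos h15]
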